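/- Let (L,σ) and (L,σ') be factor systems for (𝒢,𝒩) with the same L. Then (L,σ) and (L,σ') are equivalent (i.e. (L,σ') = h.(L,σ) for some h ∈ C¹(𝒢,𝒩)) if and only if the central 2-cocycle σ⁻¹·σ' is a 2-coboundary in B²(𝒢,Z(𝒩))_L, i.e. there exists h ∈ C¹(𝒢,Z(𝒩)) with σ(x,y)⁻¹σ'(x,y) = h(x)L_x(h(y))h(xy)⁻¹ for all composable (x,y). -/
import Mathlib


/-- A groupoid over a unit space `U`, with a total (junk-valued outside composables)
multiplication. `e : U → G` is the inclusion of units. -/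
structure Gpd (G U : Type) where
  s : G → U
  r : G → U
  e : U → G
  mul : G → G → G
  inv : G → G
  s_e : ∀ u, s (e u) = u
  r_e : ∀ u, r (e u) = u
  e_mul : ∀ x, mul (e (r x)) x = x
  mul_e : ∀ x, mul x (e (s x)) = x
  s_inv : ∀ x, s (inv x) = r x
  r_inv : ∀ x, r (inv x) = s x
  inv_mul : ∀ x, mul (inv x) x = e (s x)
  mul_inv : ∀ x, mul x (inv x) = e (r x)
  r_mul : ∀ x y, s x = r y → r (mul x y) = r x
  s_mul : ∀ x y, s x = r y → s (mul x y) = s y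
  assoc : ∀ x y z, s x = r y → s y = r z → mul (mul x y) z = mul x (mul y z)

/-- A group bundle over `U`: a total space `N` with projection `p`, each fiber being a group
(operations are total, with group laws holding fiberwise). -/
structure GrpBundle (N U : Type) where
  p : N → U
  one : U → N
  mul : N → N → N
  inv : N → N
  p_one : ∀ u, p (one u) = u
  p_mul : ∀ n m, p n = p m → p (mul n m) = p n
  p_inv : ∀ n, p (inv n) = p n
  one_mul : ∀ n, mul (one (p n)) n = n
  mul_one : ∀ n, mul n (one (p n)) = n
  inv_mul : ∀ n, mul (inv n) n = one (p n)
  mul_inv : ∀ n, mul n (inv n) = one (p n)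
  assoc : ∀ a b c, p a = p b → p b = p c → mul (mul a b) c = mul a (mul b c)

/-- A pair `(L, σ)` satisfying all the conditions of a factor system for `(𝒢, 𝒩)` except
possibly the twisted cocycle condition (F2): `L` is a family of fiberwise group isomorphisms
`L x : N_{s x} → N_{r x}`, trivial on units, and `σ : 𝒢⁽²⁾ → 𝒩` is normalized with
`σ (x, y) ∈ N_{r x}`, satisfying the twisted action condition (F1). -/
structure PreFS {G U N : Type} (𝒢 : Gpd G U) (𝒩 : GrpBundle N U) where
  L : G → N → N
  σ : G → G → N
  L_fib : ∀ x n, 𝒩.p n = 𝒢.s x → 𝒩.p (L x n) = 𝒢.r x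
  L_mul : ∀ x n m, 𝒩.p n = 𝒢.s x → 𝒩.p m = 𝒢.s x →
    L x (𝒩.mul n m) = 𝒩.mul (L x n) (L x m)
  L_bij : ∀ x, Set.BijOn (L x) {n | 𝒩.p n = 𝒢.s x} {n | 𝒩.p n = 𝒢.r x}
  L_e : ∀ u n, 𝒩.p n = u → L (𝒢.e u) n = n
  σ_fib : ∀ x y, 𝒢.s x = 𝒢.r y → 𝒩.p (σ x y) = 𝒢.r x
  σ_e_left : ∀ x, σ (𝒢.e (𝒢.r x)) x = 𝒩.one (𝒢.r x)
  σ_e_right : ∀ x, σ x (𝒢.e (𝒢.s x)) = 𝒩.one (𝒢.r x)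
  F1 : ∀ x y n, 𝒢.s x = 𝒢.r y → 𝒩.p n = 𝒢.s y →
    L x (L y n) = 𝒩.mul (𝒩.mul (σ x y) (L (𝒢.mul x y) n)) (𝒩.inv (σ x y))

/-- A factor system `(L, σ)` for `(𝒢, 𝒩)`: conditions (F1) and (F2). -/
structure FS {G U N : Type} (𝒢 : Gpd G U) (𝒩 : GrpBundle N U) extends PreFS 𝒢 𝒩 where
  F2 : ∀ x y z, 𝒢.s x = 𝒢.r y → 𝒢.s y = 𝒢.r z →
    𝒩.mul (σ x y) (σ (𝒢.mul x y) z) = 𝒩.mul (L x (σ y z)) (σ x (𝒢.mul y z))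

/-- The action of `h ∈ C¹(𝒢,𝒩)` on the `L`-part of a factor system:
`(h.L)_x(n) = h(x) L_x(n) h(x)⁻¹`. -/
def actL {G U N : Type} (𝒩 : GrpBundle N U) (h : G → N) (L : G → N → N) : G → N → N :=
  fun x n => 𝒩.mul (𝒩.mul (h x) (L x n)) (𝒩.inv (h x))

/-- The action of `h ∈ C¹(𝒢,𝒩)` on the `σ`-part of a factor system:
`(h.σ)(x,y) = h(x) L_x(h(y)) σ(x,y) h(xy)⁻¹`. -/
def actS {G U N : Type} (𝒢 : Gpd G U) (𝒩 : GrpBundle N U) (h : G → N)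
    (L : G → N → N) (σ : G → G → N) : G → G → N :=
  fun x y => 𝒩.mul (𝒩.mul (𝒩.mul (h x) (L x (h y))) (σ x y)) (𝒩.inv (h (𝒢.mul x y)))

/-- The fiber of a group bundle over a point, as a type. -/
def GrpBundle.Fib {N U : Type} (B : GrpBundle N U) (u : U) : Type := {n : N // B.p n = u}

instance {N U : Type} (B : GrpBundle N U) (u : U) : Group (B.Fib u) where
  mul a b := ⟨B.mul a.1 b.1, by rw [B.p_mul a.1 b.1 (a.2.trans b.2.symm), a.2]⟩
  one := ⟨B.one u, B.p_one u⟩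
  inv a := ⟨B.inv a.1, (B.p_inv a.1).trans a.2⟩
  mul_assoc a b c := Subtype.ext (B.assoc _ _ _ (a.2.trans b.2.symm) (b.2.trans c.2.symm))
  one_mul a := Subtype.ext (by have := B.one_mul a.1; rwa [a.2] at this)
  mul_one a := Subtype.ext (by have := B.mul_one a.1; rwa [a.2] at this)
  inv_mul_cancel a := Subtype.ext (by have := B.inv_mul a.1; rwa [a.2] at this)

/-- Given centrality of `h`, the two `σ`-conditions are equivalent. -/
lemma sigma_iff {G U N : Type} (𝒢 : Gpd G U) (𝒩 : GrpBundle N U) (F F' : FS 𝒢 𝒩)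
    (h : G → N) (hf : ∀ x, 𝒩.p (h x) = 𝒢.r x)
    (hcent : ∀ x m, 𝒩.p m = 𝒢.r x → 𝒩.mul (h x) m = 𝒩.mul m (h x))
    (x y : G) (hxy : 𝒢.s x = 𝒢.r y) :
    F'.σ x y = actS 𝒢 𝒩 h F.L F.σ x y ↔
      𝒩.mul (𝒩.inv (F.σ x y)) (F'.σ x y) =
        𝒩.mul (𝒩.mul (h x) (F.L x (h y))) (𝒩.inv (h (𝒢.mul x y))) := by
  have hpy : 𝒩.p (h y) = 𝒢.s x := by rw [hxy]; exact hf y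
  let C : 𝒩.Fib (𝒢.r x) := ⟨h x, hf x⟩
  let D : 𝒩.Fib (𝒢.r x) := ⟨F.L x (h y), F.L_fib x (h y) hpy⟩
  let S : 𝒩.Fib (𝒢.r x) := ⟨F.σ x y, F.σ_fib x y hxy⟩
  let S' : 𝒩.Fib (𝒢.r x) := ⟨F'.σ x y, F'.σ_fib x y hxy⟩
  let E : 𝒩.Fib (𝒢.r x) := ⟨h (𝒢.mul x y), by rw [hf (𝒢.mul x y), 𝒢.r_mul x y hxy]⟩
  have hCS : C * S = S * C := Subtype.ext (hcent x (F.σ x y) (F.σ_fib x y hxy))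
  have hDm : 𝒩.mul (F.L x (h y)) (F.σ x y) = 𝒩.mul (F.σ x y) (F.L x (h y)) := by
    obtain ⟨n, hn, hni⟩ := (F.L_bij x).surjOn (F.σ_fib x y hxy)
    have hny : 𝒩.p n = 𝒢.r y := by rw [← hxy]; exact hn
    rw [← hni]
    calc 𝒩.mul (F.L x (h y)) (F.L x n) = F.L x (𝒩.mul (h y) n) :=
          (F.L_mul x _ _ hpy hn).symm
      _ = F.L x (𝒩.mul n (h y)) := by rw [hcent y n hny]
      _ = 𝒩.mul (F.L x n) (F.L x (h y)) := F.L_mul x _ _ hn hpy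
  have hDS : D * S = S * D := Subtype.ext hDm
  have key : (C * D) * S = S * (C * D) := by
    rw [mul_assoc, hDS, ← mul_assoc, hCS, mul_assoc]
  constructor
  · intro hs
    have hS' : S' = ((C * D) * S) * E⁻¹ := Subtype.ext hs
    have h1 : S⁻¹ * S' = (C * D) * E⁻¹ := by rw [hS', key]; group
    exact congrArg Subtype.val h1
  · intro hs
    have h1 : S⁻¹ * S' = (C * D) * E⁻¹ := Subtype.ext hs
    have h2 : S' = ((C * D) * S) * E⁻¹ := by
      rw [key, mul_assoc, ← h1]; group
    exact congrArg Subtype.val h2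

/-- Let `(L,σ)` and `(L,σ')` be factor systems with the same `L`.  Then they
are equivalent (i.e. `(L,σ') = h.(L,σ)` for some `h ∈ C¹(𝒢,𝒩)`) iff the central 2-cocycle
`σ⁻¹·σ'` is a coboundary, i.e. there is a central `h ∈ C¹(𝒢,Z(𝒩))` with
`σ(x,y)⁻¹σ'(x,y) = h(x) L_x(h(y)) h(xy)⁻¹` for all composable `(x,y)`. -/
theorem stmt10 {G U N : Type} (𝒢 : Gpd G U) (𝒩 : GrpBundle N U) (F F' : FS 𝒢 𝒩)
    (hL : F'.L = F.L) :
    (∃ h : G → N, (∀ x, 𝒩.p (h x) = 𝒢.r x) ∧ (∀ u, h (𝒢.e u) = 𝒩.one u) ∧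
        (∀ x n, 𝒩.p n = 𝒢.s x → F'.L x n = actL 𝒩 h F.L x n) ∧
        (∀ x y, 𝒢.s x = 𝒢.r y → F'.σ x y = actS 𝒢 𝒩 h F.L F.σ x y)) ↔
    (∃ h : G → N, (∀ x, 𝒩.p (h x) = 𝒢.r x) ∧ (∀ u, h (𝒢.e u) = 𝒩.one u) ∧
        -- h is central
        (∀ x m, 𝒩.p m = 𝒢.r x → 𝒩.mul (h x) m = 𝒩.mul m (h x)) ∧
        -- σ⁻¹·σ' = d¹_L(h)
        (∀ x y, 𝒢.s x = 𝒢.r y →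
          𝒩.mul (𝒩.inv (F.σ x y)) (F'.σ x y) =
            𝒩.mul (𝒩.mul (h x) (F.L x (h y))) (𝒩.inv (h (𝒢.mul x y))))) := by
  constructor
  · rintro ⟨h, hf, he, hLc, hSc⟩
    have hcent : ∀ x m, 𝒩.p m = 𝒢.r x → 𝒩.mul (h x) m = 𝒩.mul m (h x) := by
      intro x m hm
      obtain ⟨n, hn, rfl⟩ := (F.L_bij x).surjOn hm
      have h1 : F.L x n = 𝒩.mul (𝒩.mul (h x) (F.L x n)) (𝒩.inv (h x)) := by
        have := hLc x n hn; rwa [hL] at this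
      let A : 𝒩.Fib (𝒢.r x) := ⟨h x, hf x⟩
      let M : 𝒩.Fib (𝒢.r x) := ⟨F.L x n, hm⟩
      have h2 : M = A * M * A⁻¹ := Subtype.ext h1
      have h3 : A * M = M * A := by
        nth_rewrite 2 [h2]
        group
      exact congrArg Subtype.val h3
    exact ⟨h, hf, he, hcent, fun x y hxy =>
      (sigma_iff 𝒢 𝒩 F F' h hf hcent x y hxy).mp (hSc x y hxy)⟩
  · rintro ⟨h, hf, he, hcent, hcob⟩
    refine ⟨h, hf, he, ?_, fun x y hxy =>
      (sigma_iff 𝒢 𝒩 F F' h hf hcent x y hxy).mpr (hcob x y hxy)⟩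
    intro x n hn
    let A : 𝒩.Fib (𝒢.r x) := ⟨h x, hf x⟩
    let M : 𝒩.Fib (𝒢.r x) := ⟨F.L x n, F.L_fib x n hn⟩
    have hc : A * M = M * A := Subtype.ext (hcent x (F.L x n) (F.L_fib x n hn))
    have h1 : (A * M) * A⁻¹ = M := by rw [hc]; group
    rw [hL]
    exact (congrArg Subtype.val h1).symm
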